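/- Two stable pairs (a, f) and (a', f') on k^m (with f, f∘a, …, f∘a^{m−1} linearly independent and likewise for (a',f')) are conjugate under the GL_m(k)-action g·(a,f) = (g a g⁻¹, f g⁻¹) if and only if a and a' have the same characteristic polynomial. -/

import Mathlib

open Matrix Polynomial

section Aux
variable {k : Type*} [Field k] {m : ℕ}

/-- The matrix whose rows are the coordinates of `f ∘ aⁱ`. -/
def stabMat (a : Matrix (Fin m) (Fin m) k) (f : (Fin m → k) →ₗ[k] k) :
    Matrix (Fin m) (Fin m) k :=
  Matrix.of fun i j => f ((a ^ (i : ℕ)).mulVec (Pi.single j 1))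

/-- The "companion-transpose" matrix attached to a polynomial. -/
def compMat (p : k[X]) : Matrix (Fin m) (Fin m) k :=
  Matrix.of fun i j => if (i : ℕ) + 1 = m then -(p.coeff j)
    else if (j : ℕ) = (i : ℕ) + 1 then 1 else 0

lemma ite_single (j : Fin m) :
    (fun l => if j = l then (1 : k) else 0) = Pi.single j 1 := by
  ext l; simp [Pi.single_apply, eq_comm]

lemma stabMat_mulVec (a : Matrix (Fin m) (Fin m) k) (f : (Fin m → k) →ₗ[k] k)
    (v : Fin m → k) (i : Fin m) :
    (stabMat a f).mulVec v i = f ((a ^ (i : ℕ)).mulVec v) := by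
  have h := LinearMap.pi_apply_eq_sum_univ (f ∘ₗ Matrix.mulVecLin (a ^ (i : ℕ))) v
  simp only [LinearMap.comp_apply, Matrix.mulVecLin_apply, ite_single] at h
  rw [h]
  simp only [Matrix.mulVec, dotProduct, stabMat, Matrix.of_apply, smul_eq_mul]
  exact Finset.sum_congr rfl fun j _ => mul_comm _ _

lemma stabMat_isUnit (a : Matrix (Fin m) (Fin m) k) (f : (Fin m → k) →ₗ[k] k)
    (hstab : LinearIndependent k
      (fun i : Fin m => f ∘ₗ Matrix.mulVecLin (a ^ (i : ℕ)))) :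
    IsUnit (stabMat a f) := by
  rw [← Matrix.linearIndependent_rows_iff_isUnit]
  let Ψ : ((Fin m → k) →ₗ[k] k) →ₗ[k] (Fin m → k) :=
    LinearMap.pi fun j => LinearMap.applyₗ (Pi.single j 1)
  have hΨ : LinearMap.ker Ψ = ⊥ := by
    rw [LinearMap.ker_eq_bot]
    intro ℓ ℓ' h
    apply LinearMap.ext
    intro v
    rw [LinearMap.pi_apply_eq_sum_univ ℓ v, LinearMap.pi_apply_eq_sum_univ ℓ' v]
    refine Finset.sum_congr rfl fun j _ => ?_
    have hj : ℓ (Pi.single j 1) = ℓ' (Pi.single j 1) := congrFun h j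
    rw [ite_single, hj]
  have hrows : (fun i : Fin m => stabMat a f i)
      = fun i : Fin m => Ψ (f ∘ₗ Matrix.mulVecLin (a ^ (i : ℕ))) := by
    funext i; funext j
    simp only [stabMat, Ψ, LinearMap.pi_apply, Matrix.of_apply]
    rfl
  show LinearIndependent k (fun i : Fin m => stabMat a f i)
  rw [hrows]
  exact hstab.map' Ψ hΨ

lemma sum_mulVec' {ι : Type*} (s : Finset ι) (M : ι → Matrix (Fin m) (Fin m) k)
    (v : Fin m → k) : (∑ j ∈ s, M j) *ᵥ v = ∑ j ∈ s, (M j *ᵥ v) := by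
  ext i
  simp only [Matrix.mulVec, dotProduct, Finset.sum_apply, Matrix.sum_apply,
    Finset.sum_mul]
  exact Finset.sum_comm

lemma stabMat_mul (a : Matrix (Fin m) (Fin m) k) (f : (Fin m → k) →ₗ[k] k) :
    stabMat a f * a = (compMat a.charpoly : Matrix (Fin m) (Fin m) k) * stabMat a f := by
  have hdeg : a.charpoly.natDegree = m := by
    simpa using a.charpoly_natDegree_eq_dim
  have hmon : a.charpoly.coeff m = 1 := by
    have h := a.charpoly_monic
    rw [Polynomial.Monic, Polynomial.leadingCoeff, hdeg] at h
    exact h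
  have hCH : (a ^ m : Matrix (Fin m) (Fin m) k)
      = -∑ j ∈ Finset.range m, a.charpoly.coeff j • a ^ j := by
    have h0 := a.aeval_self_charpoly
    rw [Polynomial.aeval_eq_sum_range, hdeg, Finset.sum_range_succ, hmon, one_smul] at h0
    exact eq_neg_of_add_eq_zero_right h0
  have hL : ∀ (i l : Fin m),
      (stabMat a f * a) i l = f ((a ^ ((i : ℕ) + 1)).mulVec (Pi.single l 1)) := by
    intro i l
    have h2 : (stabMat a f * a) i l
        = (stabMat a f).mulVec (a.mulVec (Pi.single l 1)) i := by
      rw [Matrix.mulVec_mulVec]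
      simp [Matrix.mulVec_single]
    rw [h2, stabMat_mulVec, Matrix.mulVec_mulVec, ← pow_succ]
  ext i l
  rw [hL i l, Matrix.mul_apply]
  by_cases hi : (i : ℕ) + 1 = m
  · rw [hi, hCH, Matrix.neg_mulVec, map_neg,
      ← Fin.sum_univ_eq_sum_range (fun j => a.charpoly.coeff j • a ^ j) m,
      sum_mulVec', map_sum]
    simp only [Matrix.smul_mulVec, _root_.map_smul, smul_eq_mul]
    rw [← Finset.sum_neg_distrib]
    refine Finset.sum_congr rfl fun j _ => ?_
    simp [compMat, stabMat, hi, neg_mul]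
  · have hlt : (i : ℕ) + 1 < m := lt_of_le_of_ne (Nat.succ_le_of_lt i.isLt) hi
    rw [Finset.sum_eq_single (⟨(i : ℕ) + 1, hlt⟩ : Fin m)]
    · simp [compMat, hi, stabMat]
    · intro b _ hb
      have hb' : ¬((b : ℕ) = (i : ℕ) + 1) := fun hc => hb (Fin.ext hc)
      simp [compMat, hi, hb']
    · simp

lemma charpoly_conj' (g : GL (Fin m) k) (a : Matrix (Fin m) (Fin m) k) :
    ((g : Matrix (Fin m) (Fin m) k) * a *
      ((g⁻¹ : GL (Fin m) k) : Matrix (Fin m) (Fin m) k)).charpoly = a.charpoly := by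
  set φ : Matrix (Fin m) (Fin m) k →+* Matrix (Fin m) (Fin m) k[X] := (C : k →+* k[X]).mapMatrix with hφ
  have hgg : φ (g : Matrix (Fin m) (Fin m) k)
      * φ ((g⁻¹ : GL (Fin m) k) : Matrix (Fin m) (Fin m) k) = 1 := by
    rw [← _root_.map_mul, Units.mul_inv, _root_.map_one]
  have hch : charmatrix ((g : Matrix (Fin m) (Fin m) k) * a *
        ((g⁻¹ : GL (Fin m) k) : Matrix (Fin m) (Fin m) k))
      = φ (g : Matrix (Fin m) (Fin m) k) * charmatrix a
        * φ ((g⁻¹ : GL (Fin m) k) : Matrix (Fin m) (Fin m) k) := by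
    unfold charmatrix
    rw [mul_sub, sub_mul]
    congr 1
    · rw [mul_assoc,
        (Matrix.scalar_commute (X : k[X]) (fun r => Commute.all X r)
          (φ ((g⁻¹ : GL (Fin m) k) : Matrix (Fin m) (Fin m) k))).eq,
        ← mul_assoc, hgg, one_mul]
    · show (C : k →+* k[X]).mapMatrix ((g : Matrix (Fin m) (Fin m) k) * a * ((g⁻¹ : GL (Fin m) k) : Matrix (Fin m) (Fin m) k))
          = (C : k →+* k[X]).mapMatrix (g : Matrix (Fin m) (Fin m) k)
            * (C : k →+* k[X]).mapMatrix a * (C : k →+* k[X]).mapMatrix ((g⁻¹ : GL (Fin m) k) : Matrix (Fin m) (Fin m) k)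
      rw [← _root_.map_mul, ← _root_.map_mul]
  have hgg' : φ ((g⁻¹ : GL (Fin m) k) : Matrix (Fin m) (Fin m) k)
      * φ (g : Matrix (Fin m) (Fin m) k) = 1 := by
    rw [← _root_.map_mul, Units.inv_mul, _root_.map_one]
  unfold Matrix.charpoly
  rw [hch, Matrix.det_mul, Matrix.det_mul, mul_comm, ← mul_assoc, ← Matrix.det_mul, hgg']
  simp

end Aux

theorem stable_pairs_conjugate_iff_charpoly_eq
    {k : Type*} [Field k] {m : ℕ}
    (a a' : Matrix (Fin m) (Fin m) k) (f f' : (Fin m → k) →ₗ[k] k)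
    (hstab : LinearIndependent k
      (fun i : Fin m => f ∘ₗ Matrix.mulVecLin (a ^ (i : ℕ))))
    (hstab' : LinearIndependent k
      (fun i : Fin m => f' ∘ₗ Matrix.mulVecLin (a' ^ (i : ℕ)))) :
    (∃ g : GL (Fin m) k,
        a' = (g : Matrix (Fin m) (Fin m) k) * a *
          ((g⁻¹ : GL (Fin m) k) : Matrix (Fin m) (Fin m) k) ∧
        f' = f ∘ₗ Matrix.mulVecLin ((g⁻¹ : GL (Fin m) k) : Matrix (Fin m) (Fin m) k))
      ↔ Matrix.charpoly a = Matrix.charpoly a' := by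
  constructor
  · rintro ⟨g, ha, -⟩
    rw [ha, charpoly_conj']
  · intro hchar
    rcases Nat.eq_zero_or_pos m with hm | hm
    · subst hm
      refine ⟨1, Subsingleton.elim _ _, ?_⟩
      apply LinearMap.ext
      intro v
      have hv : v = 0 := Subsingleton.elim v 0
      have hz : ∀ g : (Fin 0 → k) →ₗ[k] k, ∀ w : Fin 0 → k, g w = 0 := by
        intro g w
        rw [Subsingleton.elim w 0, map_zero]
      simp [hz]
    · haveI : NeZero m := ⟨hm.ne'⟩
      obtain ⟨uG, huG⟩ := stabMat_isUnit a f hstab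
      obtain ⟨uG', huG'⟩ := stabMat_isUnit a' f' hstab'
      have h1 : (↑uG : Matrix (Fin m) (Fin m) k) * a
          = (compMat a.charpoly : Matrix (Fin m) (Fin m) k) * (↑uG : Matrix (Fin m) (Fin m) k) := by
        rw [huG]; exact stabMat_mul a f
      have h2 : (↑uG' : Matrix (Fin m) (Fin m) k) * a'
          = (compMat a.charpoly : Matrix (Fin m) (Fin m) k) * (↑uG' : Matrix (Fin m) (Fin m) k) := by
        rw [huG', hchar]; exact stabMat_mul a' f'
      have hinv : ((uG'⁻¹ * uG)⁻¹ : (Matrix (Fin m) (Fin m) k)ˣ) = uG⁻¹ * uG' := by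
        rw [_root_.mul_inv_rev, inv_inv]
      refine ⟨uG'⁻¹ * uG, ?_, ?_⟩
      · rw [hinv, Units.val_mul, Units.val_mul]
        have hC : (↑uG : Matrix (Fin m) (Fin m) k) * a * (↑uG⁻¹ : Matrix (Fin m) (Fin m) k) = compMat a.charpoly := by
          rw [h1, mul_assoc, Units.mul_inv, mul_one]
        have hC' : (↑uG' : Matrix (Fin m) (Fin m) k) * a' * (↑uG'⁻¹ : Matrix (Fin m) (Fin m) k) = compMat a.charpoly := by
          rw [h2, mul_assoc, Units.mul_inv, mul_one]
        have h3 : (↑uG'⁻¹ : Matrix (Fin m) (Fin m) k) * ((↑uG : Matrix (Fin m) (Fin m) k) * a * (↑uG⁻¹ : Matrix (Fin m) (Fin m) k)) * (↑uG' : Matrix (Fin m) (Fin m) k)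
            = (↑uG'⁻¹ : Matrix (Fin m) (Fin m) k) * ((↑uG' : Matrix (Fin m) (Fin m) k) * a' * (↑uG'⁻¹ : Matrix (Fin m) (Fin m) k)) * (↑uG' : Matrix (Fin m) (Fin m) k) := by
          rw [hC, hC']
        have h4 : (↑uG'⁻¹ : Matrix (Fin m) (Fin m) k)
            * ((↑uG' : Matrix (Fin m) (Fin m) k) * a' * (↑uG'⁻¹ : Matrix (Fin m) (Fin m) k)) * (↑uG' : Matrix (Fin m) (Fin m) k) = a' := by
          rw [← mul_assoc, ← mul_assoc, Units.inv_mul, one_mul, mul_assoc, Units.inv_mul, mul_one]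
        rw [← h4, ← h3]
        simp only [mul_assoc]
      · rw [hinv]
        apply LinearMap.ext
        intro v
        have hf : ∀ w : Fin m → k, f w = (stabMat a f).mulVec w 0 := by
          intro w
          rw [stabMat_mulVec]
          simp
        have hf' : f' v = (stabMat a' f').mulVec v 0 := by
          rw [stabMat_mulVec]
          simp
        rw [hf', LinearMap.comp_apply, Matrix.mulVecLin_apply, hf, Matrix.mulVec_mulVec,
          ← huG, ← Units.val_mul, mul_inv_cancel_left, huG']
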